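/- There do not exist a kernel 𝒟 : ℕ³ → ℝ with Σ_{l,m,n} 𝒟(l,m,n)² < ∞ and a vector ū ∈ ℓ²(ℕ;ℝ) such that Σ_{m,n} 𝒟(l,m,n) ūₘ vₙ = −2 v_l for every v ∈ ℓ²(ℕ;ℝ) and every l ∈ ℕ. (In other words, the Hilbert–Schmidt condition on the kernel of the bilinear map D is incompatible with the relation D(ū,·) = −2·Id arising from linearization of Γu′ = D̃(u,u).) -/

import Mathlib

private lemma aux_ineq (c a b : ℝ) (hc : 0 < c) :
    |a * b| ≤ (c / 2) * a ^ 2 + (1 / (2 * c)) * b ^ 2 := by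
  have key : 2 * c * (|a| * |b|) ≤ c ^ 2 * a ^ 2 + b ^ 2 := by
    nlinarith [sq_nonneg (c * |a| - |b|), sq_abs a, sq_abs b]
  rw [abs_mul, show (c / 2) * a ^ 2 + (1 / (2 * c)) * b ^ 2
      = (c ^ 2 * a ^ 2 + b ^ 2) / (2 * c) by field_simp,
    le_div_iff₀ (by positivity)]
  linarith [key]

/-- There is no square-summable (Hilbert–Schmidt) kernel
`𝒟 : ℕ³ → ℝ` and vector `ū ∈ ℓ²(ℕ;ℝ)` such that
`Σ_{m,n} 𝒟(l,m,n) ūₘ vₙ = −2 v_l` for every `v ∈ ℓ²` and every `l`. -/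
theorem stmt4 : ¬ ∃ (𝒟 : ℕ × ℕ × ℕ → ℝ) (u : ℕ → ℝ),
    Summable (fun t => (𝒟 t) ^ 2) ∧ Summable (fun m => (u m) ^ 2) ∧
    ∀ v : ℕ → ℝ, Summable (fun n => (v n) ^ 2) →
      ∀ l, ∑' p : ℕ × ℕ, 𝒟 (l, p.1, p.2) * u p.1 * v p.2 = -2 * v l := by
  rintro ⟨𝒟, u, hD, hu, h⟩
  set C : ℝ := ∑' m, (u m) ^ 2 with hC
  have hC0 : 0 ≤ C := tsum_nonneg fun m => sq_nonneg _
  have hc1 : (0:ℝ) < C + 1 := by linarith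
  -- diagonal kernel is square-summable
  have hdiag : Summable (fun p : ℕ × ℕ => (𝒟 (p.1, p.2, p.1)) ^ 2) := by
    have hinj : Function.Injective (fun p : ℕ × ℕ => ((p.1, p.2, p.1) : ℕ × ℕ × ℕ)) := by
      intro p q hpq
      simp only [Prod.mk.injEq] at hpq
      exact Prod.ext hpq.1 hpq.2.1
    exact hD.comp_injective hinj
  -- each diagonal row has square-sum ≥ 3/(C+1)
  have key : ∀ k : ℕ, 3 / (C + 1) ≤ ∑' m, (𝒟 (k, m, k)) ^ 2 := by
    intro k
    have hrow : Summable (fun m => (𝒟 (k, m, k)) ^ 2) := hdiag.prod_factor k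
    have hbound : Summable (fun m => ((C + 1) / 2) * (𝒟 (k, m, k)) ^ 2
        + (1 / (2 * (C + 1))) * (u m) ^ 2) :=
      (hrow.mul_left _).add (hu.mul_left _)
    have habs : Summable (fun m => |𝒟 (k, m, k) * u m|) :=
      Summable.of_nonneg_of_le (fun m => abs_nonneg _)
        (fun m => aux_ineq (C + 1) _ _ hc1) hbound
    have hprod : Summable (fun m => 𝒟 (k, m, k) * u m) := habs.of_abs
    -- apply the hypothesis to the indicator vector at k
    set v : ℕ → ℝ := fun n => if n = k then 1 else 0 with hv
    have hvs : Summable (fun n => (v n) ^ 2) := by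
      apply summable_of_ne_finset_zero (s := {k})
      intro n hn
      simp only [Finset.mem_singleton] at hn
      simp [hv, hn]
    have hk := h v hvs k
    have hvk : v k = 1 := by simp [hv]
    rw [hvk] at hk
    -- rewrite the double sum as a single sum over m
    have hinj2 : Function.Injective (fun m : ℕ => ((m, k) : ℕ × ℕ)) := by
      intro a b hab
      simpa using congrArg Prod.fst hab
    have hsupp : Function.support (fun p : ℕ × ℕ => 𝒟 (k, p.1, p.2) * u p.1 * v p.2)
        ⊆ Set.range (fun m : ℕ => ((m, k) : ℕ × ℕ)) := by
      rintro ⟨m, n⟩ hp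
      by_contra hpr
      have hnk : n ≠ k := by
        intro hnk
        exact hpr ⟨m, by simp [hnk]⟩
      simp only [Function.mem_support, hv] at hp
      simp [hnk] at hp
    have hbij := Function.Injective.tsum_eq hinj2
      (f := fun p : ℕ × ℕ => 𝒟 (k, p.1, p.2) * u p.1 * v p.2) hsupp
    simp only [hvk, mul_one] at hbij
    have hsum2 : ∑' m : ℕ, 𝒟 (k, m, k) * u m = -2 := by
      rw [hbij, hk]; ring
    -- bound
    have h2 : (2:ℝ) ≤ ∑' m, |𝒟 (k, m, k) * u m| := by
      calc (2:ℝ) = |∑' m : ℕ, 𝒟 (k, m, k) * u m| := by rw [hsum2]; norm_num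
        _ ≤ ∑' m, |𝒟 (k, m, k) * u m| := by
          have := norm_tsum_le_tsum_norm (f := fun m => 𝒟 (k, m, k) * u m)
            (by simpa only [Real.norm_eq_abs] using habs)
          simpa only [Real.norm_eq_abs] using this
    have h3 : ∑' m, |𝒟 (k, m, k) * u m|
        ≤ ((C + 1) / 2) * (∑' m, (𝒟 (k, m, k)) ^ 2) + (1 / (2 * (C + 1))) * C := by
      have hle := Summable.tsum_le_tsum (fun m => aux_ineq (C + 1) (𝒟 (k, m, k)) (u m) hc1)
        habs hbound
      calc ∑' m, |𝒟 (k, m, k) * u m| ≤ _ := hle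
        _ = ((C + 1) / 2) * (∑' m, (𝒟 (k, m, k)) ^ 2) + (1 / (2 * (C + 1))) * C := by
          rw [Summable.tsum_add (hrow.mul_left _) (hu.mul_left _), tsum_mul_left, tsum_mul_left]
    have hfrac : (1 / (2 * (C + 1))) * C ≤ 1 / 2 := by
      rw [div_mul_eq_mul_div, one_mul, div_le_div_iff₀ (by positivity) (by norm_num)]
      linarith
    have h4 : (3 : ℝ) / 2 ≤ ((C + 1) / 2) * (∑' m, (𝒟 (k, m, k)) ^ 2) := by linarith
    rw [div_le_iff₀ hc1, mul_comm]
    linarith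
  -- but the diagonal row square-sums are summable in k, hence tend to 0
  have hrowsum : Summable (fun k => ∑' m, (𝒟 (k, m, k)) ^ 2) :=
    ((summable_prod_of_nonneg (fun p => sq_nonneg _)).mp hdiag).2
  have htend := hrowsum.tendsto_atTop_zero
  have hpos : (0:ℝ) < 3 / (C + 1) := by positivity
  obtain ⟨k, hk⟩ := (htend.eventually (gt_mem_nhds hpos)).exists
  exact absurd (key k) (not_le.mpr hk)
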